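/- The function κ : (0,∞) → ℝ defined by κ(s) = √5/s satisfies the ODE κ·κ''' + 2κ'·κ'' − 2κ³·κ' = 0 on (0,∞), satisfies 5(κ'(s))² = κ⁴(s) for all s > 0, and moreover κ''(s) − 2κ³(s) = −8√5/s³, which is nonzero for every s > 0. -/

import Mathlib

private lemma aux_hasDeriv (c : ℝ) (m : ℤ) {x : ℝ} (hx : x ≠ 0) :
    HasDerivAt (fun s : ℝ => c * s ^ m) (c * m * x ^ (m - 1)) x := by
  simpa [mul_assoc] using (hasDerivAt_zpow m x (Or.inl hx)).const_mul c

/-- The function `κ(s) = √5/s` on `(0,∞)` satisfies the ODE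
`κκ''' + 2κ'κ'' − 2κ³κ' = 0`, its doubly integrated form `5(κ')² = κ⁴`,
and `κ'' − 2κ³ = −8√5/s³ ≠ 0`. -/
theorem stmt_2 (κ : ℝ → ℝ) (hκ : κ = fun s => Real.sqrt 5 / s) :
    ∀ s : ℝ, 0 < s →
      (κ s * iteratedDeriv 3 κ s + 2 * deriv κ s * iteratedDeriv 2 κ s
          - 2 * (κ s) ^ 3 * deriv κ s = 0) ∧
      (5 * (deriv κ s) ^ 2 = (κ s) ^ 4) ∧
      (iteratedDeriv 2 κ s - 2 * (κ s) ^ 3 = -8 * Real.sqrt 5 / s ^ 3) ∧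
      (iteratedDeriv 2 κ s - 2 * (κ s) ^ 3 ≠ 0) := by
  set c := Real.sqrt 5 with hc
  have hκ' : κ = fun s : ℝ => c * s ^ (-1 : ℤ) := by
    funext x; simp [hκ, div_eq_mul_inv]
  -- first derivative
  have h1 : ∀ x : ℝ, x ≠ 0 → deriv κ x = -c * x ^ (-2 : ℤ) := by
    intro x hx
    rw [hκ', (aux_hasDeriv c (-1) hx).deriv]
    push_cast
    ring
  -- second derivative
  have h2 : ∀ x : ℝ, x ≠ 0 → iteratedDeriv 2 κ x = 2 * c * x ^ (-3 : ℤ) := by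
    intro x hx
    have heq : deriv κ =ᶠ[nhds x] fun y => -c * y ^ (-2 : ℤ) :=
      (eventually_ne_nhds hx).mono fun y hy => h1 y hy
    rw [show (2 : ℕ) = 1 + 1 from rfl, iteratedDeriv_succ, iteratedDeriv_one,
      heq.deriv_eq]
    have := (aux_hasDeriv (-c) (-2) hx).deriv
    rw [this]; push_cast; ring
  -- third derivative
  have h3 : ∀ x : ℝ, x ≠ 0 → iteratedDeriv 3 κ x = -6 * c * x ^ (-4 : ℤ) := by
    intro x hx
    have heq : iteratedDeriv 2 κ =ᶠ[nhds x] fun y => 2 * c * y ^ (-3 : ℤ) :=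
      (eventually_ne_nhds hx).mono fun y hy => h2 y hy
    rw [show (3 : ℕ) = 2 + 1 from rfl, iteratedDeriv_succ, heq.deriv_eq]
    have := (aux_hasDeriv (2 * c) (-3) hx).deriv
    rw [this]; push_cast; ring
  intro s hs
  have hs0 : s ≠ 0 := ne_of_gt hs
  have hc2 : c ^ 2 = 5 := Real.sq_sqrt (by norm_num)
  have hcpos : 0 < c := Real.sqrt_pos.mpr (by norm_num)
  have hd1 := h1 s hs0
  have hd2 := h2 s hs0
  have hd3 := h3 s hs0
  have hκs : κ s = c / s := by rw [hκ]
  have hz2 : s ^ (-2 : ℤ) = (s ^ 2)⁻¹ := by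
    rw [zpow_neg]; norm_cast
  have hz3 : s ^ (-3 : ℤ) = (s ^ 3)⁻¹ := by
    rw [zpow_neg]; norm_cast
  have hz4 : s ^ (-4 : ℤ) = (s ^ 4)⁻¹ := by
    rw [zpow_neg]; norm_cast
  rw [hd1, hd2, hd3, hκs, hz2, hz3, hz4] at *
  have key : 2 * c * (s ^ 3)⁻¹ - 2 * (c / s) ^ 3 = -8 * c / s ^ 3 := by
    field_simp
    nlinarith [hc2]
  refine ⟨?_, ?_, key, ?_⟩
  · field_simp
    linear_combination (2 * c ^ 2) * hc2
  · field_simp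
    linear_combination (-1 : ℝ) * hc2
  · rw [key]
    apply div_ne_zero _ (by positivity)
    nlinarith [hcpos]
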